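/- Let n_s ≥ 2, let Δs_0, …, Δs_{n_s-1} > 0, K_∥ > 0, γ ≥ 0, Δt > 0. Suppose (T_i^n)_{0≤i≤n_s-1, n∈ℕ} satisfies the implicit finite volume scheme (T_i^{n+1} − T_i^n)/Δt = (F_{i+1/2}^{n+1} − F_{i−1/2}^{n+1})/Δs_i, where for 0 ≤ i ≤ n_s−2, F_{i+1/2}^{n+1} = (4K_∥/7)·(|T_{i+1}^{n+1}|^{5/2} T_{i+1}^{n+1} − |T_i^{n+1}|^{5/2} T_i^{n+1})/(Δs_{i+1} + Δs_i), and F_{−1/2}^{n+1} = γ T_0^{n+1}, F_{n_s−1/2}^{n+1} = −γ T_{n_s−1}^{n+1}, with T_i^0 ≥ 0 for all i. Then the discrete L² norm is non-increasing: for every n ∈ ℕ, Σ_{i=0}^{n_s−1} Δs_i |T_i^{n+1}|² ≤ Σ_{i=0}^{n_s−1} Δs_i |T_i^n|², and in particular Σ_i Δs_i |T_i^{n+1}|² ≤ Σ_i Δs_i |T_i^0|². -/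
import Mathlib

private lemma phi_mono {a b : ℝ} (h : a ≤ b) :
    |a| ^ ((5:ℝ)/2) * a ≤ |b| ^ ((5:ℝ)/2) * b := by
  rcases le_total 0 a with ha | ha
  · have hb : 0 ≤ b := ha.trans h
    rw [abs_of_nonneg ha, abs_of_nonneg hb]
    exact mul_le_mul (Real.rpow_le_rpow ha h (by norm_num)) h ha
      (Real.rpow_nonneg hb _)
  · rcases le_total 0 b with hb | hb
    · have h1 : |a| ^ ((5:ℝ)/2) * a ≤ 0 :=
        mul_nonpos_of_nonneg_of_nonpos (Real.rpow_nonneg (abs_nonneg a) _) ha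
      have h2 : (0:ℝ) ≤ |b| ^ ((5:ℝ)/2) * b :=
        mul_nonneg (Real.rpow_nonneg (abs_nonneg b) _) hb
      linarith
    · have h' : -b ≤ -a := neg_le_neg h
      have hb' : 0 ≤ -b := neg_nonneg.2 hb
      have ha' : 0 ≤ -a := hb'.trans h'
      rw [abs_of_nonpos ha, abs_of_nonpos hb]
      have key := mul_le_mul (Real.rpow_le_rpow hb' h' (by norm_num)) h' hb'
        (Real.rpow_nonneg ha' ((5:ℝ)/2))
      nlinarith [key]

private lemma abel_sum (f g : ℕ → ℝ) : ∀ m, 1 ≤ m →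
    ∑ i ∈ Finset.range m, (f (i+1) - f i) * g i
      = f m * g (m-1) - f 0 * g 0
        - ∑ i ∈ Finset.Ico 1 m, f i * (g i - g (i-1)) := by
  intro m
  induction m with
  | zero => omega
  | succ k ih =>
    intro _
    rcases Nat.eq_zero_or_pos k with hk | hk
    · subst hk
      simp [Finset.sum_range_succ]
      ring
    · rw [Finset.sum_range_succ, ih hk, Finset.sum_Ico_succ_top hk]
      simp only [Nat.add_sub_cancel]
      ring

/-- Discrete L² stability part of Proposition 2.2 for the backward Euler
finite volume scheme for the 1D nonlinear heat equation: the discrete L²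
norm is non-increasing in time.  Here `F n i` denotes the numerical flux
`F_{i-1/2}^n` computed from the values at time level `n`. -/
theorem implicit_scheme_L2_stability
    (ns : ℕ) (hns : 2 ≤ ns)
    (Δs : ℕ → ℝ) (hΔs : ∀ i < ns, 0 < Δs i)
    (K γ Δt : ℝ) (hK : 0 < K) (hγ : 0 ≤ γ) (hΔt : 0 < Δt)
    (T F : ℕ → ℕ → ℝ)
    (hF0 : ∀ n, F n 0 = γ * T n 0)
    (hFns : ∀ n, F n ns = -γ * T n (ns - 1))
    (hFint : ∀ n i, 1 ≤ i → i ≤ ns - 1 →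
      F n i = (4 * K / 7) *
        (|T n i| ^ ((5:ℝ)/2) * T n i - |T n (i-1)| ^ ((5:ℝ)/2) * T n (i-1))
        / (Δs i + Δs (i-1)))
    (hscheme : ∀ n, ∀ i < ns,
      (T (n+1) i - T n i) / Δt = (F (n+1) (i+1) - F (n+1) i) / Δs i)
    (hinit : ∀ i < ns, 0 ≤ T 0 i) :
    (∀ n, (∑ i ∈ Finset.range ns, Δs i * |T (n+1) i|^2)
        ≤ ∑ i ∈ Finset.range ns, Δs i * |T n i|^2)
    ∧ (∀ n, (∑ i ∈ Finset.range ns, Δs i * |T (n+1) i|^2)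
        ≤ ∑ i ∈ Finset.range ns, Δs i * |T 0 i|^2) := by
  have key : ∀ n, (∑ i ∈ Finset.range ns, Δs i * |T (n+1) i|^2)
      ≤ ∑ i ∈ Finset.range ns, Δs i * |T n i|^2 := by
    intro n
    -- per-cell identity
    have h1 : ∀ i < ns, Δs i * (T (n+1) i - T n i)
        = Δt * (F (n+1) (i+1) - F (n+1) i) := by
      intro i hi
      have h := hscheme n i hi
      rw [div_eq_div_iff hΔt.ne' (hΔs i hi).ne'] at h
      linear_combination h
    -- weighted sum
    have hsum : ∑ i ∈ Finset.range ns, Δs i * (T (n+1) i - T n i) * T (n+1) i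
        = Δt * ∑ i ∈ Finset.range ns,
            (F (n+1) (i+1) - F (n+1) i) * T (n+1) i := by
      rw [Finset.mul_sum]
      refine Finset.sum_congr rfl fun i hi => ?_
      rw [h1 i (Finset.mem_range.mp hi)]
      ring
    -- Abel summation
    have habel := abel_sum (F (n+1)) (T (n+1)) ns (by omega)
    -- boundary terms
    have hb1 : F (n+1) ns * T (n+1) (ns - 1) ≤ 0 := by
      rw [hFns]
      nlinarith [sq_nonneg (T (n+1) (ns - 1))]
    have hb0 : 0 ≤ F (n+1) 0 * T (n+1) 0 := by
      rw [hF0]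
      nlinarith [sq_nonneg (T (n+1) 0)]
    -- interior dissipation
    have hint : 0 ≤ ∑ i ∈ Finset.Ico 1 ns,
        F (n+1) i * (T (n+1) i - T (n+1) (i-1)) := by
      refine Finset.sum_nonneg fun i hi => ?_
      obtain ⟨hi1, hi2⟩ := Finset.mem_Ico.mp hi
      rw [hFint (n+1) i hi1 (by omega)]
      have hd : 0 < Δs i + Δs (i-1) :=
        add_pos (hΔs i hi2) (hΔs (i-1) (by omega))
      have hc : (0:ℝ) ≤ 4 * K / 7 := by positivity
      have hprod : 0 ≤ (|T (n+1) i| ^ ((5:ℝ)/2) * T (n+1) i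
          - |T (n+1) (i-1)| ^ ((5:ℝ)/2) * T (n+1) (i-1))
          * (T (n+1) i - T (n+1) (i-1)) := by
        rcases le_total (T (n+1) (i-1)) (T (n+1) i) with hle | hle
        · have := phi_mono hle
          nlinarith
        · have := phi_mono hle
          nlinarith
      have heq : 4 * K / 7 *
          (|T (n+1) i| ^ ((5:ℝ)/2) * T (n+1) i
            - |T (n+1) (i-1)| ^ ((5:ℝ)/2) * T (n+1) (i-1))
          / (Δs i + Δs (i-1)) * (T (n+1) i - T (n+1) (i-1))
        = (4 * K / 7) * ((|T (n+1) i| ^ ((5:ℝ)/2) * T (n+1) i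
            - |T (n+1) (i-1)| ^ ((5:ℝ)/2) * T (n+1) (i-1))
          * (T (n+1) i - T (n+1) (i-1))) / (Δs i + Δs (i-1)) := by
        ring
      rw [heq]
      exact div_nonneg (mul_nonneg hc hprod) hd.le
    have hS : ∑ i ∈ Finset.range ns,
        (F (n+1) (i+1) - F (n+1) i) * T (n+1) i ≤ 0 := by
      rw [habel]; linarith
    have hneg : ∑ i ∈ Finset.range ns,
        Δs i * (T (n+1) i - T n i) * T (n+1) i ≤ 0 := by
      rw [hsum]
      exact mul_nonpos_of_nonneg_of_nonpos hΔt.le hS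
    -- convexity inequality per term
    have hterm : ∀ i ∈ Finset.range ns,
        Δs i * |T (n+1) i|^2 - Δs i * |T n i|^2
          ≤ 2 * (Δs i * (T (n+1) i - T n i) * T (n+1) i) := by
      intro i hi
      have hi' := Finset.mem_range.mp hi
      rw [sq_abs, sq_abs]
      nlinarith [mul_nonneg (hΔs i hi').le (sq_nonneg (T (n+1) i - T n i))]
    have := Finset.sum_le_sum hterm
    rw [Finset.sum_sub_distrib, ← Finset.mul_sum] at this
    linarith
  refine ⟨key, ?_⟩
  intro n
  induction n with
  | zero => exact key 0
  | succ k ih => exact (key (k+1)).trans ih
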